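/- Let N ≥ 1 be an integer, let k > 0 be real, and let a ∈ {0,…,N−1}. Define the vector v = exp(−(log k / 2)·J_z) · (exp(−i·(π/2)·J_y) · e_a) ∈ ℂ^N, where e_a is the a-th standard basis vector and exp is the matrix exponential. Then ((1/√k)·J₊ + √k·J₋) · v = (2a − (N−1)) · v; i.e., v is an eigenvector of k^{−1/2}·J₊ + k^{1/2}·J₋ with eigenvalue 2a − (N−1) = 2m (where m = a − j). -/

import Mathlib

open Matrix

/-- Ladder coefficients c_a = √((N−1−a)(a+1)), so that c_{N−1} = 0. -/
noncomputable def spinC (N a : ℕ) : ℝ :=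
  Real.sqrt (((N : ℝ) - 1 - a) * (a + 1))

/-- Raising operator J₊: (J₊)_{a+1,a} = c_a, all other entries 0. -/
noncomputable def Jp (N : ℕ) : Matrix (Fin N) (Fin N) ℂ :=
  Matrix.of fun a b => if (a : ℕ) = (b : ℕ) + 1 then ((spinC N b : ℝ) : ℂ) else 0

/-- Lowering operator J₋ = J₊ᵀ. -/
noncomputable def Jm (N : ℕ) : Matrix (Fin N) (Fin N) ℂ := (Jp N)ᵀ

/-- J_z = diag(a − (N−1)/2). -/
noncomputable def Jz (N : ℕ) : Matrix (Fin N) (Fin N) ℂ :=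
  Matrix.diagonal fun a => ((a : ℂ) - ((N : ℂ) - 1) / 2)

/-- J_x = (J₊ + J₋)/2. -/
noncomputable def Jx (N : ℕ) : Matrix (Fin N) (Fin N) ℂ :=
  (1 / 2 : ℂ) • (Jp N + Jm N)

/-- J_y = (J₊ − J₋)/(2i). -/
noncomputable def Jy (N : ℕ) : Matrix (Fin N) (Fin N) ℂ :=
  (1 / (2 * Complex.I)) • (Jp N - Jm N)

/-! ### Auxiliary lemmas -/

lemma Jp_apply (N : ℕ) (i j : Fin N) :
    Jp N i j = if (i : ℕ) = (j : ℕ) + 1 then ((spinC N j : ℝ) : ℂ) else 0 := rfl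

lemma Jm_apply (N : ℕ) (i j : Fin N) :
    Jm N i j = if (j : ℕ) = (i : ℕ) + 1 then ((spinC N i : ℝ) : ℂ) else 0 := rfl

lemma spinC_sq (N a : ℕ) (ha : a + 1 ≤ N) :
    ((spinC N a : ℝ) : ℂ) * ((spinC N a : ℝ) : ℂ) = (((N : ℝ) - 1 - a) * (a + 1) : ℝ) := by
  have ha' : (a : ℝ) + 1 ≤ N := by exact_mod_cast ha
  have h0 : (0:ℝ) ≤ ((N : ℝ) - 1 - a) * (a + 1) := by
    have hb : (0:ℝ) ≤ (a:ℝ) + 1 := by positivity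
    nlinarith
  rw [← Complex.ofReal_mul, spinC, Real.mul_self_sqrt h0]

lemma commZP (N : ℕ) : Jz N * Jp N = Jp N * Jz N + Jp N := by
  ext i j
  rw [Jz, Matrix.add_apply, Matrix.diagonal_mul, Matrix.mul_diagonal, Jp_apply]
  by_cases h : (i : ℕ) = (j : ℕ) + 1
  · simp only [h, if_pos]
    push_cast
    ring
  · simp [h]

lemma commZQ (N : ℕ) : Jz N * Jm N = Jm N * Jz N - Jm N := by
  ext i j
  rw [Jz, Matrix.sub_apply, Matrix.diagonal_mul, Matrix.mul_diagonal, Jm_apply]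
  by_cases h : (j : ℕ) = (i : ℕ) + 1
  · simp only [h, if_pos]
    push_cast
    ring
  · simp [h]

lemma sum_pred {N : ℕ} (i : Fin N) (f : Fin N → ℂ) :
    (∑ b : Fin N, if (i : ℕ) = (b : ℕ) + 1 then f b else 0)
      = if h : 0 < (i : ℕ) then f ⟨(i : ℕ) - 1, by omega⟩ else 0 := by
  split_ifs with h
  · rw [Finset.sum_eq_single_of_mem (⟨(i : ℕ) - 1, by have := i.isLt; omega⟩ : Fin N)
      (Finset.mem_univ _)]
    · rw [if_pos (by simp; omega)]
    · intro b _ hb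
      rw [if_neg]
      intro hc
      exact hb (Fin.ext (by simp; omega))
  · apply Finset.sum_eq_zero
    intro b _
    rw [if_neg]
    omega

lemma sum_succ {N : ℕ} (i : Fin N) (f : Fin N → ℂ) :
    (∑ b : Fin N, if (b : ℕ) = (i : ℕ) + 1 then f b else 0)
      = if h : (i : ℕ) + 1 < N then f ⟨(i : ℕ) + 1, h⟩ else 0 := by
  split_ifs with h
  · rw [Finset.sum_eq_single_of_mem (⟨(i : ℕ) + 1, h⟩ : Fin N) (Finset.mem_univ _)]
    · rw [if_pos (by simp)]
    · intro b _ hb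
      rw [if_neg]
      intro hc
      exact hb (Fin.ext (by simp [hc]))
  · apply Finset.sum_eq_zero
    intro b _
    rw [if_neg]
    intro hc
    exact h (hc ▸ b.isLt)

lemma commPQ (N : ℕ) : Jp N * Jm N = Jm N * Jp N + (2 : ℂ) • Jz N := by
  ext i j
  rw [Matrix.add_apply, Matrix.mul_apply, Matrix.mul_apply, Matrix.smul_apply, Jz]
  simp only [Jp_apply, Jm_apply, ite_mul, zero_mul, mul_ite, mul_zero]
  by_cases hij : i = j
  · subst hij
    simp only [diagonal_apply_eq, ← ite_and, and_self, smul_eq_mul]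
    rw [sum_pred i (fun b => ((spinC N b : ℝ):ℂ) * ((spinC N b : ℝ):ℂ)),
        sum_succ i (fun _ => ((spinC N (i:ℕ) : ℝ):ℂ) * ((spinC N (i:ℕ) : ℝ):ℂ))]
    have hiN := i.isLt
    split_ifs with h1 h2 h2
    · rw [spinC_sq N ((i:ℕ) - 1) (by omega), spinC_sq N (i:ℕ) (by omega)]
      push_cast [Nat.cast_sub (show 1 ≤ (i:ℕ) by omega)]
      ring
    · rw [spinC_sq N ((i:ℕ) - 1) (by omega)]
      have hN : (N : ℂ) = ((i:ℕ) : ℂ) + 1 := by exact_mod_cast (by omega : N = (i:ℕ) + 1)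
      push_cast [Nat.cast_sub (show 1 ≤ (i:ℕ) by omega)]
      rw [hN]; ring
    · rw [spinC_sq N (i:ℕ) (by omega)]
      have h0 : ((i:ℕ) : ℂ) = 0 := by exact_mod_cast (by omega : (i:ℕ) = 0)
      push_cast
      rw [h0]; ring
    · have hN : (N : ℂ) = 1 := by exact_mod_cast (by omega : N = 1)
      have h0 : ((i:ℕ) : ℂ) = 0 := by exact_mod_cast (by omega : (i:ℕ) = 0)
      push_cast
      rw [h0, hN]; ring
  · rw [diagonal_apply_ne _ hij, Finset.sum_eq_zero (fun b _ => ?_),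
      Finset.sum_eq_zero (fun b _ => ?_)]
    · simp
    · split_ifs with h1 h2 <;> first | exact absurd (Fin.ext (by omega)) hij | rfl
    · split_ifs with h1 h2 <;> first | exact absurd (Fin.ext (by omega)) hij | rfl

/-- If `A * B = B * C` then `exp A * B = B * exp C`. -/
lemma exp_intertwine {n : ℕ} (A B C : Matrix (Fin n) (Fin n) ℂ) (h : A * B = B * C) :
    NormedSpace.exp A * B = B * NormedSpace.exp C := by
  have hpow : ∀ m : ℕ, A ^ m * B = B * C ^ m := by
    intro m
    induction m with
    | zero => simp
    | succ m ih => rw [pow_succ, pow_succ, mul_assoc, h, ← mul_assoc, ih, mul_assoc]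
  letI : SeminormedRing (Matrix (Fin n) (Fin n) ℂ) := Matrix.linftyOpSemiNormedRing
  letI : NormedRing (Matrix (Fin n) (Fin n) ℂ) := Matrix.linftyOpNormedRing
  letI : NormedAlgebra ℂ (Matrix (Fin n) (Fin n) ℂ) := Matrix.linftyOpNormedAlgebra
  have hA := NormedSpace.expSeries_summable' (𝕂 := ℂ) A
  have hC := NormedSpace.expSeries_summable' (𝕂 := ℂ) C
  rw [NormedSpace.exp_eq_tsum (𝕂 := ℂ)]
  beta_reduce
  refine (Summable.tsum_mul_right B hA).symm.trans (Eq.trans ?_ (Summable.tsum_mul_left B hC))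
  exact tsum_congr fun m => by rw [smul_mul_assoc, hpow m, mul_smul_comm]

/-- Abstract commutation computation in a ℂ-algebra. -/
lemma key {R : Type*} [Ring R] [Algebra ℂ R] (P Q Z : R)
    (hZP : Z * P = P * Z + P) (hZQ : Z * Q = Q * Z - Q)
    (hPQ : P * Q = Q * P + (2 : ℂ) • Z) (r s : ℂ) (hs : s * s = -(1/4 : ℂ)) :
    ((-r) • (P - Q)) * (Z - s • (P + Q))
      = (Z - s • (P + Q)) * ((-r) • (P - Q)) + (4 * r * s) • (Z - s • (P + Q)) := by
  simp only [sub_mul, mul_sub, add_mul, mul_add, smul_mul_assoc, mul_smul_comm, smul_sub,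
    smul_add, smul_smul, hZP, hZQ, hPQ]
  have hs' : s ^ 2 = -(1/4 : ℂ) := by rw [sq]; exact hs
  match_scalars <;> first
    | ring1
    | (ring_nf; rw [hs']; ring1)

lemma exp_smul_one {n : ℕ} (t : ℂ) :
    NormedSpace.exp (t • (1 : Matrix (Fin n) (Fin n) ℂ)) = Complex.exp t • 1 := by
  have h1 : (t • (1 : Matrix (Fin n) (Fin n) ℂ)) = Matrix.diagonal (fun _ => t) := by
    ext i j; by_cases h : i = j <;> simp [h]
  have h2 : (Complex.exp t • (1 : Matrix (Fin n) (Fin n) ℂ))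
      = Matrix.diagonal (fun _ => Complex.exp t) := by
    ext i j; by_cases h : i = j <;> simp [h]
  rw [h1, h2, Matrix.exp_diagonal, Pi.exp_def]
  simp [← Complex.exp_eq_exp_ℂ]

lemma exp_add_smul_one {n : ℕ} (C : Matrix (Fin n) (Fin n) ℂ) (t : ℂ) :
    NormedSpace.exp (C + t • (1 : Matrix (Fin n) (Fin n) ℂ))
      = Complex.exp t • NormedSpace.exp C := by
  rw [Matrix.exp_add_of_commute C (t • 1) ((Commute.one_right C).smul_right t),
    exp_smul_one, mul_smul_comm, mul_one]

/-- Rotation identity: (J₊ + J₋) · e^{-i(π/2)J_y} = e^{-i(π/2)J_y} · (2 J_z). -/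
lemma rot (N : ℕ) :
    (Jp N + Jm N) * NormedSpace.exp (-(Complex.I * ((Real.pi : ℝ) / 2 : ℝ)) • Jy N)
      = NormedSpace.exp (-(Complex.I * ((Real.pi : ℝ) / 2 : ℝ)) • Jy N)
          * ((2:ℂ) • Jz N) := by
  set r : ℂ := ((Real.pi / 4 : ℝ) : ℂ) with hr
  have hC : -(Complex.I * (((Real.pi : ℝ) / 2 : ℝ) : ℂ)) • Jy N = (-r) • (Jp N - Jm N) := by
    rw [Jy, smul_smul]
    congr 1
    rw [hr]
    push_cast
    field_simp
    ring_nf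
  have hsp : (Complex.I/2) * (Complex.I/2) = -(1/4 : ℂ) := by
    rw [div_mul_div_comm, Complex.I_mul_I]; norm_num
  have hsm : (-(Complex.I/2)) * (-(Complex.I/2)) = -(1/4 : ℂ) := by rw [neg_mul_neg]; exact hsp
  have hexp1 : Complex.exp (4*r*(Complex.I/2)) = Complex.I := by
    have h : (4*r*(Complex.I/2) : ℂ) = ((Real.pi/2 : ℝ) : ℂ) * Complex.I := by
      rw [hr]; push_cast; ring
    rw [h, Complex.exp_mul_I, ← Complex.ofReal_cos, ← Complex.ofReal_sin,
      Real.cos_pi_div_two, Real.sin_pi_div_two]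
    simp
  have hexp2 : Complex.exp (4*r*(-(Complex.I/2))) = -Complex.I := by
    have h : (4*r*(-(Complex.I/2)) : ℂ) = ((-(Real.pi/2) : ℝ) : ℂ) * Complex.I := by
      rw [hr]; push_cast; ring
    rw [h, Complex.exp_mul_I, ← Complex.ofReal_cos, ← Complex.ofReal_sin,
      Real.cos_neg, Real.sin_neg, Real.cos_pi_div_two, Real.sin_pi_div_two]
    simp
  have h1 := key (Jp N) (Jm N) (Jz N) (commZP N) (commZQ N) (commPQ N) r (Complex.I/2) hsp
  have h2 := key (Jp N) (Jm N) (Jz N) (commZP N) (commZQ N) (commPQ N) r (-(Complex.I/2)) hsm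
  have h1' : ((-r) • (Jp N - Jm N)) * (Jz N - (Complex.I/2) • (Jp N + Jm N))
      = (Jz N - (Complex.I/2) • (Jp N + Jm N))
          * ((-r) • (Jp N - Jm N) + (4*r*(Complex.I/2)) • 1) := by
    rw [mul_add, show (Jz N - (Complex.I/2) • (Jp N + Jm N)) * ((4*r*(Complex.I/2)) • 1)
      = (4*r*(Complex.I/2)) • (Jz N - (Complex.I/2) • (Jp N + Jm N)) from by
        rw [mul_smul_comm, mul_one]]
    exact h1
  have h2' : ((-r) • (Jp N - Jm N)) * (Jz N - (-(Complex.I/2)) • (Jp N + Jm N))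
      = (Jz N - (-(Complex.I/2)) • (Jp N + Jm N))
          * ((-r) • (Jp N - Jm N) + (4*r*(-(Complex.I/2))) • 1) := by
    rw [mul_add, show (Jz N - (-(Complex.I/2)) • (Jp N + Jm N)) * ((4*r*(-(Complex.I/2))) • 1)
      = (4*r*(-(Complex.I/2))) • (Jz N - (-(Complex.I/2)) • (Jp N + Jm N)) from by
        rw [mul_smul_comm, mul_one]]
    exact h2
  have e1 := exp_intertwine _ _ _ h1'
  have e2 := exp_intertwine _ _ _ h2'
  rw [exp_add_smul_one, hexp1, mul_smul_comm] at e1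
  rw [exp_add_smul_one, hexp2, mul_smul_comm] at e2
  rw [hC]
  symm
  calc NormedSpace.exp ((-r) • (Jp N - Jm N)) * ((2:ℂ) • Jz N)
      = NormedSpace.exp ((-r) • (Jp N - Jm N)) * (Jz N - (Complex.I/2) • (Jp N + Jm N))
        + NormedSpace.exp ((-r) • (Jp N - Jm N))
            * (Jz N - (-(Complex.I/2)) • (Jp N + Jm N)) := by
        rw [← mul_add]; congr 1; module
    _ = Complex.I • ((Jz N - (Complex.I/2) • (Jp N + Jm N))
            * NormedSpace.exp ((-r) • (Jp N - Jm N)))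
        + (-Complex.I) • ((Jz N - (-(Complex.I/2)) • (Jp N + Jm N))
            * NormedSpace.exp ((-r) • (Jp N - Jm N))) := by rw [e1, e2]
    _ = Complex.I • (((Jz N - (Complex.I/2) • (Jp N + Jm N))
            - (Jz N - (-(Complex.I/2)) • (Jp N + Jm N)))
          * NormedSpace.exp ((-r) • (Jp N - Jm N))) := by
        conv_rhs => rw [sub_mul]
        module
    _ = (Jp N + Jm N) * NormedSpace.exp ((-r) • (Jp N - Jm N)) := by
        rw [show (Jz N - (Complex.I/2) • (Jp N + Jm N))
            - (Jz N - (-(Complex.I/2)) • (Jp N + Jm N))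
            = (-Complex.I) • (Jp N + Jm N) from by module,
          smul_mul_assoc, smul_smul,
          show Complex.I * -Complex.I = 1 from by rw [mul_neg, Complex.I_mul_I, neg_neg],
          one_smul]

/-- Squeezing identity. -/
lemma step1 (N : ℕ) (k : ℝ) (hk : 0 < k) :
    ((1 / (Real.sqrt k : ℂ)) • Jp N + ((Real.sqrt k : ℝ) : ℂ) • Jm N)
        * NormedSpace.exp (-((Real.log k / 2 : ℝ) : ℂ) • Jz N)
      = NormedSpace.exp (-((Real.log k / 2 : ℝ) : ℂ) • Jz N) * (Jp N + Jm N) := by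
  set s : ℂ := -((Real.log k / 2 : ℝ) : ℂ) with hs
  have hdiag : s • Jz N
      = Matrix.diagonal (fun i : Fin N => s * ((i:ℂ) - ((N:ℂ)-1)/2)) := by
    ext i j; by_cases h : i = j <;> simp [Jz, h, Matrix.smul_apply]
  have hdexp : NormedSpace.exp (s • Jz N)
      = Matrix.diagonal (fun i : Fin N => Complex.exp (s * ((i:ℂ) - ((N:ℂ)-1)/2))) := by
    rw [hdiag, Matrix.exp_diagonal, Pi.exp_def, ← Complex.exp_eq_exp_ℂ]
  have hsqrt : Real.exp (Real.log k / 2) = Real.sqrt k := by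
    have h2 : Real.exp (Real.log k / 2) * Real.exp (Real.log k / 2) = k := by
      rw [← Real.exp_add, show Real.log k / 2 + Real.log k / 2 = Real.log k by ring,
        Real.exp_log hk]
    have h3 : Real.sqrt (Real.exp (Real.log k / 2) * Real.exp (Real.log k / 2))
        = Real.exp (Real.log k / 2) := Real.sqrt_mul_self (Real.exp_pos _).le
    rw [← h3, h2]
  have hexp_s : Complex.exp s = (((Real.sqrt k)⁻¹ : ℝ) : ℂ) := by
    have hsc : s = ((-(Real.log k / 2) : ℝ) : ℂ) := by rw [hs]; push_cast; ring
    rw [hsc, ← Complex.ofReal_exp, Real.exp_neg, hsqrt]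
  have hne : Real.sqrt k ≠ 0 := ne_of_gt (Real.sqrt_pos.mpr hk)
  have hnec : ((Real.sqrt k : ℝ) : ℂ) ≠ 0 := by exact_mod_cast hne
  rw [hdexp]
  ext i j
  rw [Matrix.mul_diagonal, Matrix.diagonal_mul]
  simp only [Matrix.add_apply, Matrix.smul_apply, Jp_apply, Jm_apply, smul_eq_mul]
  by_cases h1 : (i:ℕ) = (j:ℕ) + 1
  · have h2 : ¬ ((j:ℕ) = (i:ℕ) + 1) := by omega
    rw [if_pos h1, if_neg h2, mul_zero, add_zero]
    have hic : (i:ℂ) = (j:ℂ) + 1 := by exact_mod_cast congrArg (Nat.cast : ℕ → ℂ) h1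
    have hd : s * ((i:ℂ) - ((N:ℂ)-1)/2) = s * ((j:ℂ) - ((N:ℂ)-1)/2) + s := by
      rw [hic]; ring
    rw [hd, Complex.exp_add, hexp_s]
    push_cast
    field_simp
    ring
  · by_cases h2 : (j:ℕ) = (i:ℕ) + 1
    · rw [if_pos h2, if_neg h1, mul_zero, zero_add]
      have hjc : (j:ℂ) = (i:ℂ) + 1 := by exact_mod_cast congrArg (Nat.cast : ℕ → ℂ) h2
      have hd : s * ((j:ℂ) - ((N:ℂ)-1)/2) = s * ((i:ℂ) - ((N:ℂ)-1)/2) + s := by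
        rw [hjc]; ring
      rw [hd, Complex.exp_add, hexp_s]
      push_cast
      field_simp
      ring
    · simp [h1, h2]

/-- The vector exp(−(ln k/2)J_z)·exp(−i(π/2)J_y)·e_a is an eigenvector of
k^{−1/2}J₊ + k^{1/2}J₋ with eigenvalue 2a − (N−1). -/
theorem squeezed_eigenvector (N : ℕ) (hN : 1 ≤ N) (k : ℝ) (hk : 0 < k) (a : Fin N) :
    ((1 / (Real.sqrt k : ℂ)) • Jp N + ((Real.sqrt k : ℝ) : ℂ) • Jm N).mulVec
        ((NormedSpace.exp (-((Real.log k / 2 : ℝ) : ℂ) • Jz N)).mulVec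
          ((NormedSpace.exp (-(Complex.I * ((Real.pi : ℝ) / 2 : ℝ)) • Jy N)).mulVec
            (Pi.single a 1)))
      = ((2 * (a : ℝ) - ((N : ℝ) - 1) : ℝ) : ℂ) •
          (NormedSpace.exp (-((Real.log k / 2 : ℝ) : ℂ) • Jz N)).mulVec
            ((NormedSpace.exp (-(Complex.I * ((Real.pi : ℝ) / 2 : ℝ)) • Jy N)).mulVec
              (Pi.single a 1)) := by
  simp only [Matrix.mulVec_mulVec]
  rw [← Matrix.mul_assoc, step1 N k hk, Matrix.mul_assoc, rot N, ← Matrix.mul_assoc,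
    ← Matrix.mulVec_mulVec]
  have hZ2 : (2:ℂ) • Jz N
      = Matrix.diagonal (fun i : Fin N => (2:ℂ) * ((i:ℂ) - ((N:ℂ)-1)/2)) := by
    rw [Jz, ← Matrix.diagonal_smul]
    congr 1 with i
  have hZe : ((2:ℂ) • Jz N).mulVec (Pi.single a (1:ℂ))
      = ((2 * (a : ℝ) - ((N : ℝ) - 1) : ℝ) : ℂ) • (Pi.single a 1 : Fin N → ℂ) := by
    rw [hZ2, Matrix.diagonal_mulVec_single, mul_one]
    ext i
    by_cases h : i = a
    · subst h; simp [Pi.single_apply]; push_cast; ring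
    · simp [Pi.single_apply, h]
  rw [hZe, Matrix.mulVec_smul]
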